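/- The normalizer of the subgroup R_A × {0} in the group G = (SL(2,ℂ) × SL(2,ℂ)) ⋊ ℤ/2ℤ equals the subgroup S × {0} (i.e. N_G(R_A) = S, contained in G⁰; in particular no element with nontrivial ℤ/2ℤ-component normalizes R_A). -/

import Mathlib

open Matrix

abbrev SL2 := Matrix.SpecialLinearGroup (Fin 2) ℂ

/-- The diagonal matrix `diag(t, t⁻¹)` as an element of `SL(2,ℂ)`. -/
def dmat (t : ℂˣ) : SL2 :=
  ⟨!![(t : ℂ), 0; 0, ((t⁻¹ : ℂˣ) : ℂ)], by simp [Matrix.det_fin_two_of]⟩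

lemma dmat_one : dmat 1 = 1 := by
  apply Subtype.ext
  simp only [dmat, Matrix.SpecialLinearGroup.coe_one, Matrix.one_fin_two]
  norm_num

lemma dmat_mul (s t : ℂˣ) : dmat (s * t) = dmat s * dmat t := by
  apply Subtype.ext
  rw [Matrix.SpecialLinearGroup.coe_mul]
  simp only [dmat, Matrix.mul_fin_two]
  rw [mul_inv]
  push_cast
  norm_num

lemma dmat_inv (t : ℂˣ) : (dmat t)⁻¹ = dmat t⁻¹ := by
  apply Subtype.ext
  rw [Matrix.SpecialLinearGroup.coe_inv]
  simp only [dmat, Matrix.adjugate_fin_two_of]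
  norm_num

/-- The torus `R_A = {(diag(t,t⁻¹), diag(t³,t⁻³)) : t ∈ ℂˣ}`. -/
def RA : Subgroup (SL2 × SL2) where
  carrier := {p | ∃ t : ℂˣ, p = (dmat t, dmat (t ^ 3))}
  one_mem' := ⟨1, by rw [one_pow, dmat_one]; rfl⟩
  mul_mem' := by
    rintro a b ⟨s, rfl⟩ ⟨t, rfl⟩
    exact ⟨s * t, by rw [mul_pow, dmat_mul, dmat_mul]; rfl⟩
  inv_mem' := by
    rintro a ⟨t, rfl⟩
    exact ⟨t⁻¹, by rw [inv_pow, ← dmat_inv, ← dmat_inv]; rfl⟩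

/-- The subgroup `S` of `SL(2,ℂ) × SL(2,ℂ)` consisting of the pairs `(A,B)` with `A`
and `B` both diagonal or both antidiagonal. -/
def Ssub : Subgroup (SL2 × SL2) where
  carrier := {p |
    ((p.1 : Matrix (Fin 2) (Fin 2) ℂ) 0 1 = 0 ∧ (p.1 : Matrix (Fin 2) (Fin 2) ℂ) 1 0 = 0 ∧
     (p.2 : Matrix (Fin 2) (Fin 2) ℂ) 0 1 = 0 ∧ (p.2 : Matrix (Fin 2) (Fin 2) ℂ) 1 0 = 0) ∨
    ((p.1 : Matrix (Fin 2) (Fin 2) ℂ) 0 0 = 0 ∧ (p.1 : Matrix (Fin 2) (Fin 2) ℂ) 1 1 = 0 ∧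
     (p.2 : Matrix (Fin 2) (Fin 2) ℂ) 0 0 = 0 ∧ (p.2 : Matrix (Fin 2) (Fin 2) ℂ) 1 1 = 0)}
  one_mem' := by
    left
    simp [Matrix.SpecialLinearGroup.coe_one, Matrix.one_apply]
  mul_mem' := by
    intro a b ha hb
    rcases ha with ⟨h1, h2, h3, h4⟩ | ⟨h1, h2, h3, h4⟩ <;>
      rcases hb with ⟨g1, g2, g3, g4⟩ | ⟨g1, g2, g3, g4⟩
    · left
      refine ⟨?_, ?_, ?_, ?_⟩ <;>
        simp [Prod.fst_mul, Prod.snd_mul, Matrix.mul_apply, Fin.sum_univ_two,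
          h1, h2, h3, h4, g1, g2, g3, g4]
    · right
      refine ⟨?_, ?_, ?_, ?_⟩ <;>
        simp [Prod.fst_mul, Prod.snd_mul, Matrix.mul_apply, Fin.sum_univ_two,
          h1, h2, h3, h4, g1, g2, g3, g4]
    · right
      refine ⟨?_, ?_, ?_, ?_⟩ <;>
        simp [Prod.fst_mul, Prod.snd_mul, Matrix.mul_apply, Fin.sum_univ_two,
          h1, h2, h3, h4, g1, g2, g3, g4]
    · left
      refine ⟨?_, ?_, ?_, ?_⟩ <;>
        simp [Prod.fst_mul, Prod.snd_mul, Matrix.mul_apply, Fin.sum_univ_two,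
          h1, h2, h3, h4, g1, g2, g3, g4]
  inv_mem' := by
    intro a ha
    rcases ha with ⟨h1, h2, h3, h4⟩ | ⟨h1, h2, h3, h4⟩
    · left
      refine ⟨?_, ?_, ?_, ?_⟩ <;>
        simp [Prod.fst_inv, Prod.snd_inv, Matrix.SpecialLinearGroup.coe_inv,
          Matrix.adjugate_fin_two, h1, h2, h3, h4]
    · right
      refine ⟨?_, ?_, ?_, ?_⟩ <;>
        simp [Prod.fst_inv, Prod.snd_inv, Matrix.SpecialLinearGroup.coe_inv,
          Matrix.adjugate_fin_two, h1, h2, h3, h4]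

/-- The swap automorphism of `SL(2,ℂ) × SL(2,ℂ)`. -/
def swapAut : MulAut (SL2 × SL2) := (MulEquiv.prodComm : (SL2 × SL2) ≃* (SL2 × SL2))

lemma swapAut_apply (p : SL2 × SL2) : swapAut p = p.swap := rfl

lemma swapAut_sq : swapAut * swapAut = 1 := by
  apply MulEquiv.ext
  intro x
  rw [MulAut.mul_apply, swapAut_apply, swapAut_apply, Prod.swap_swap]
  rfl

/-- The homomorphism `ℤ/2ℤ →* MulAut N` determined by an automorphism of order
dividing 2, sending the nontrivial element to that automorphism. -/
def hom2 {N : Type*} [Group N] (σ : MulAut N) (h : σ * σ = 1) :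
    Multiplicative (ZMod 2) →* MulAut N where
  toFun e := σ ^ (Multiplicative.toAdd e).val
  map_one' := by simp
  map_mul' a b := by
    have h2 : σ ^ 2 = 1 := by rw [pow_two]; exact h
    show σ ^ (Multiplicative.toAdd (a * b)).val = _
    rw [toAdd_mul, ZMod.val_add, ← pow_eq_pow_mod _ h2, pow_add]

/-- The group `G = (SL(2,ℂ) × SL(2,ℂ)) ⋊ ℤ/2ℤ`, the nontrivial element of `ℤ/2ℤ`
acting by swapping the two factors. -/
abbrev Ggrp := (SL2 × SL2) ⋊[hom2 swapAut swapAut_sq] Multiplicative (ZMod 2)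


/-! ### Auxiliary lemmas -/

lemma dmat_coe (t : ℂˣ) :
    ((dmat t : SL2) : Matrix (Fin 2) (Fin 2) ℂ) = !![(t : ℂ), 0; 0, (t : ℂ)⁻¹] := by
  simp [dmat, Units.val_inv_eq_inv_val]

lemma key (A : SL2) (t s : ℂˣ) (hts : (t:ℂ) ≠ (t:ℂ)⁻¹)
    (h : A * dmat t = dmat s * A) :
    ((s:ℂ) = (t:ℂ) ∧ (A : Matrix (Fin 2) (Fin 2) ℂ) 0 1 = 0 ∧
      (A : Matrix (Fin 2) (Fin 2) ℂ) 1 0 = 0) ∨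
    ((s:ℂ) = (t:ℂ)⁻¹ ∧ (A : Matrix (Fin 2) (Fin 2) ℂ) 0 0 = 0 ∧
      (A : Matrix (Fin 2) (Fin 2) ℂ) 1 1 = 0) := by
  have h' : (A : Matrix (Fin 2) (Fin 2) ℂ) * (dmat t : Matrix (Fin 2) (Fin 2) ℂ)
      = (dmat s : Matrix (Fin 2) (Fin 2) ℂ) * A := by
    have := congrArg (Subtype.val) h
    simpa using this
  have hst' : (t:ℂ)⁻¹ ≠ (t:ℂ) := fun h => hts h.symm
  have e00 := congrFun (congrFun h' 0) 0
  have e01 := congrFun (congrFun h' 0) 1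
  have e10 := congrFun (congrFun h' 1) 0
  have e11 := congrFun (congrFun h' 1) 1
  simp [dmat_coe, Matrix.mul_apply, Fin.sum_univ_two] at e00 e01 e10 e11
  set a := (A : Matrix (Fin 2) (Fin 2) ℂ) 0 0
  set b := (A : Matrix (Fin 2) (Fin 2) ℂ) 0 1
  set c := (A : Matrix (Fin 2) (Fin 2) ℂ) 1 0
  set d := (A : Matrix (Fin 2) (Fin 2) ℂ) 1 1
  have hdet : a * d - b * c = 1 := by
    rw [← Matrix.det_fin_two]; exact A.2
  by_cases ha : a = 0
  · right
    have hb : b ≠ 0 := by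
      intro hb; rw [ha, hb] at hdet; simp at hdet
    have hst : (s:ℂ) = (t:ℂ)⁻¹ := by
      have : ((s:ℂ) - (t:ℂ)⁻¹) * b = 0 := by linear_combination -e01
      rcases mul_eq_zero.mp this with h1 | h1
      · exact sub_eq_zero.mp h1
      · exact absurd h1 hb
    refine ⟨hst, ha, ?_⟩
    have hsinv : (s:ℂ)⁻¹ = (t:ℂ) := by rw [hst, inv_inv]
    have : ((t:ℂ)⁻¹ - (t:ℂ)) * d = 0 := by
      rw [← hsinv] at e11 ⊢; linear_combination e11
    rcases mul_eq_zero.mp this with h1 | h1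
    · exact absurd (sub_eq_zero.mp h1) hst'
    · exact h1
  · left
    have hst : (s:ℂ) = (t:ℂ) := by
      have : ((s:ℂ) - (t:ℂ)) * a = 0 := by linear_combination -e00
      rcases mul_eq_zero.mp this with h1 | h1
      · exact sub_eq_zero.mp h1
      · exact absurd h1 ha
    rw [hst] at e01 e10
    refine ⟨hst, ?_, ?_⟩
    · have : ((t:ℂ)⁻¹ - (t:ℂ)) * b = 0 := by linear_combination e01
      rcases mul_eq_zero.mp this with h1 | h1
      · exact absurd (sub_eq_zero.mp h1) hst'
      · exact h1
    · have : ((t:ℂ) - (t:ℂ)⁻¹) * c = 0 := by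
        have ht0 : (t:ℂ) ≠ 0 := t.ne_zero
        field_simp at e10 ⊢
        linear_combination e10
      rcases mul_eq_zero.mp this with h1 | h1
      · exact absurd (sub_eq_zero.mp h1) hts
      · exact h1

lemma diag_conj (A : SL2) (hb : (A : Matrix (Fin 2) (Fin 2) ℂ) 0 1 = 0)
    (hc : (A : Matrix (Fin 2) (Fin 2) ℂ) 1 0 = 0) (t : ℂˣ) :
    A * dmat t * A⁻¹ = dmat t := by
  rw [mul_inv_eq_iff_eq_mul]
  apply Subtype.ext
  show (A : Matrix (Fin 2) (Fin 2) ℂ) * _ = _ * (A : Matrix (Fin 2) (Fin 2) ℂ)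
  ext i j
  fin_cases i <;> fin_cases j <;>
    simp [dmat_coe, Matrix.mul_apply, Fin.sum_univ_two, hb, hc, mul_comm]

lemma antidiag_conj (A : SL2) (ha : (A : Matrix (Fin 2) (Fin 2) ℂ) 0 0 = 0)
    (hd : (A : Matrix (Fin 2) (Fin 2) ℂ) 1 1 = 0) (t : ℂˣ) :
    A * dmat t * A⁻¹ = dmat t⁻¹ := by
  rw [mul_inv_eq_iff_eq_mul]
  apply Subtype.ext
  show (A : Matrix (Fin 2) (Fin 2) ℂ) * _ = _ * (A : Matrix (Fin 2) (Fin 2) ℂ)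
  ext i j
  fin_cases i <;> fin_cases j <;>
    simp [dmat_coe, Matrix.mul_apply, Fin.sum_univ_two, ha, hd,
      Units.val_inv_eq_inv_val, mul_comm]

lemma Ssub_conj {q : SL2 × SL2} (hq : q ∈ Ssub) {n : SL2 × SL2} (hn : n ∈ RA) :
    q * n * q⁻¹ ∈ RA := by
  obtain ⟨u, rfl⟩ := hn
  rcases hq with ⟨h1, h2, h3, h4⟩ | ⟨h1, h2, h3, h4⟩
  · refine ⟨u, Prod.ext ?_ ?_⟩
    · simpa using diag_conj q.1 h1 h2 u
    · simpa using diag_conj q.2 h3 h4 (u ^ 3)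
  · refine ⟨u⁻¹, Prod.ext ?_ ?_⟩
    · simpa using antidiag_conj q.1 h1 h2 u
    · simpa [inv_pow] using antidiag_conj q.2 h3 h4 (u ^ 3)

lemma conj_inl (g : Ggrp) (n : SL2 × SL2) :
    g * SemidirectProduct.inl n * g⁻¹
      = SemidirectProduct.inl (g.left * (hom2 swapAut swapAut_sq) g.right n * g.left⁻¹) := by
  calc g * SemidirectProduct.inl n * g⁻¹
      = SemidirectProduct.inl g.left *
          (SemidirectProduct.inr g.right * SemidirectProduct.inl n *
            (SemidirectProduct.inr g.right)⁻¹) * (SemidirectProduct.inl g.left)⁻¹ := by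
        conv_lhs => rw [← SemidirectProduct.inl_left_mul_inr_right g]
        group
    _ = SemidirectProduct.inl g.left *
          SemidirectProduct.inl ((hom2 swapAut swapAut_sq) g.right n) *
          (SemidirectProduct.inl g.left)⁻¹ := by
        rw [← _root_.map_inv SemidirectProduct.inr, ← SemidirectProduct.inl_aut]
    _ = _ := by rw [← _root_.map_inv, ← _root_.map_mul, ← _root_.map_mul]

lemma inl_mem_map {H : Subgroup (SL2 × SL2)} {x : SL2 × SL2} :
    (SemidirectProduct.inl x : Ggrp) ∈ H.map SemidirectProduct.inl ↔ x ∈ H := by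
  constructor
  · rintro ⟨y, hy, he⟩
    rwa [← SemidirectProduct.inl_injective he]
  · exact fun h => ⟨x, h, rfl⟩

lemma hom2_ofAdd_one : (hom2 swapAut swapAut_sq) (Multiplicative.ofAdd (1 : ZMod 2)) = swapAut := by
  show swapAut ^ (Multiplicative.toAdd (Multiplicative.ofAdd (1 : ZMod 2))).val = swapAut
  simp [ZMod.val_one]

lemma zmod2_cases (x : Multiplicative (ZMod 2)) :
    x = 1 ∨ x = Multiplicative.ofAdd 1 := by
  revert x; decide

noncomputable def u2 : ℂˣ := Units.mk0 2 (by norm_num)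

lemma u2_coe : ((u2 : ℂˣ) : ℂ) = 2 := rfl

lemma u2_ne : ((u2 : ℂˣ) : ℂ) ≠ ((u2 : ℂˣ) : ℂ)⁻¹ := by rw [u2_coe]; norm_num

lemma u23_coe : (((u2 ^ 3 : ℂˣ)) : ℂ) = 8 := by
  rw [Units.val_pow_eq_pow_val, u2_coe]; norm_num

lemma u23_ne : ((u2 ^ 3 : ℂˣ) : ℂ) ≠ ((u2 ^ 3 : ℂˣ) : ℂ)⁻¹ := by rw [u23_coe]; norm_num

/-- **Proposition 4.6(iii).** The normalizer of `R_A × {0}` in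
`G = (SL(2,ℂ) × SL(2,ℂ)) ⋊ ℤ/2ℤ` equals the subgroup `S × {0}`; in particular no
element with nontrivial `ℤ/2ℤ`-component normalizes `R_A`. -/
theorem normalizer_RA_eq_S :
    Subgroup.normalizer ((RA.map (SemidirectProduct.inl : (SL2 × SL2) →* Ggrp)) : Set Ggrp)
      = Ssub.map (SemidirectProduct.inl : (SL2 × SL2) →* Ggrp) := by
  ext g
  rw [Subgroup.mem_normalizer_iff]
  constructor
  · intro hg
    have key2 : ∀ n : SL2 × SL2, n ∈ RA ↔
        g.left * (hom2 swapAut swapAut_sq) g.right n * g.left⁻¹ ∈ RA := by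
      intro n
      rw [← inl_mem_map (H := RA), hg (SemidirectProduct.inl n), conj_inl, inl_mem_map]
    have hmem : ((dmat u2, dmat (u2 ^ 3)) : SL2 × SL2) ∈ RA := ⟨u2, rfl⟩
    have h0 := (key2 (dmat u2, dmat (u2 ^ 3))).mp hmem
    rcases zmod2_cases g.right with hr | hr
    · rw [hr] at h0
      simp only [_root_.map_one, MulAut.one_apply] at h0
      obtain ⟨s, hs⟩ := h0
      rw [Prod.ext_iff] at hs
      simp only [Prod.fst_mul, Prod.snd_mul, Prod.fst_inv, Prod.snd_inv] at hs
      have hA : g.left.1 * dmat u2 = dmat s * g.left.1 := by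
        have := hs.1
        rw [mul_inv_eq_iff_eq_mul] at this
        exact this
      have hB : g.left.2 * dmat (u2 ^ 3) = dmat (s ^ 3) * g.left.2 := by
        have := hs.2
        rw [mul_inv_eq_iff_eq_mul] at this
        exact this
      have kA := key g.left.1 u2 s u2_ne hA
      have kB := key g.left.2 (u2 ^ 3) (s ^ 3) u23_ne hB
      have hgleft : g = SemidirectProduct.inl g.left := by
        conv_lhs => rw [← SemidirectProduct.inl_left_mul_inr_right g]
        rw [hr]
        simp
      rw [hgleft]
      apply Subgroup.mem_map_of_mem
      rcases kA with ⟨hsA, d1, d2⟩ | ⟨hsA, d1, d2⟩ <;>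
        rcases kB with ⟨hsB, d3, d4⟩ | ⟨hsB, d3, d4⟩
      · exact Or.inl ⟨d1, d2, d3, d4⟩
      · exfalso
        rw [u2_coe] at hsA
        rw [u23_coe, Units.val_pow_eq_pow_val, hsA] at hsB
        norm_num at hsB
      · exfalso
        rw [u2_coe] at hsA
        rw [u23_coe, Units.val_pow_eq_pow_val, hsA] at hsB
        norm_num at hsB
      · exact Or.inr ⟨d1, d2, d3, d4⟩
    · exfalso
      rw [hr, hom2_ofAdd_one, swapAut_apply] at h0
      obtain ⟨s, hs⟩ := h0
      rw [Prod.ext_iff] at hs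
      simp only [Prod.fst_mul, Prod.snd_mul, Prod.fst_inv, Prod.snd_inv, Prod.fst_swap,
        Prod.snd_swap] at hs
      have hA : g.left.1 * dmat (u2 ^ 3) = dmat s * g.left.1 := by
        have := hs.1
        rw [mul_inv_eq_iff_eq_mul] at this
        exact this
      have hB : g.left.2 * dmat u2 = dmat (s ^ 3) * g.left.2 := by
        have := hs.2
        rw [mul_inv_eq_iff_eq_mul] at this
        exact this
      have kA := key g.left.1 (u2 ^ 3) s u23_ne hA
      have kB := key g.left.2 u2 (s ^ 3) u2_ne hB
      rcases kA with ⟨hsA, -, -⟩ | ⟨hsA, -, -⟩ <;>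
        rcases kB with ⟨hsB, -, -⟩ | ⟨hsB, -, -⟩ <;>
      · rw [u23_coe] at hsA
        rw [u2_coe, Units.val_pow_eq_pow_val, hsA] at hsB
        norm_num at hsB
  · rintro ⟨p, hp, rfl⟩
    intro h
    constructor
    · rintro ⟨n, hn, rfl⟩
      rw [← _root_.map_inv, ← _root_.map_mul, ← _root_.map_mul]
      exact inl_mem_map.mpr (Ssub_conj hp hn)
    · intro hconj
      obtain ⟨m, hm, he⟩ := hconj
      have h' : h = (SemidirectProduct.inl p)⁻¹ * SemidirectProduct.inl m *
          SemidirectProduct.inl p := by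
        rw [he]; group
      rw [h', ← _root_.map_inv, ← _root_.map_mul, ← _root_.map_mul]
      exact inl_mem_map.mpr (by simpa using Ssub_conj (Ssub.inv_mem hp) hm)
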